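/- Let λ > 1 and let h_λ be the conjugacy satisfying F_λ ∘ h_λ = h_λ ∘ F_{λ₀}, depending holomorphically/differentiably on λ, with ∂h_λ/∂λ uniformly bounded and |(F_λ^n)'| ≥ K(1+α)^n on the Julia set for some K, α > 0. Then for every z, ∂h_λ(z)/∂λ = (1 − 1/λ) · Σ_{k=1}^∞ 1/(F_λ^k)'(h_λ(z)) − 1/λ, where the series converges absolutely. -/

import Mathlib

open Finset

/-- The exponential family `f_λ(z) = λ(e^z − 1)` (acting on the cylinder, where it has
the same formula). -/
noncomputable def expMap (lam : ℝ) (z : ℂ) : ℂ := lam * (Complex.exp z - 1)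

/-- Derivative of the `k`-th iterate of `expMap lam` at `z`:
`(F_λ^k)'(z) = ∏_{j<k} λ e^{F_λ^j(z)}`. -/
noncomputable def iterDeriv (lam : ℝ) (k : ℕ) (z : ℂ) : ℂ :=
  ∏ j ∈ Finset.range k, ((lam : ℂ) * Complex.exp ((expMap lam)^[j] z))


open Filter


set_option maxHeartbeats 1000000 in
lemma aux7 (lam C α K : ℝ) (hC : 0 < C) (hα : 0 < α) (x : ℂ) (a d : ℕ → ℂ)
    (ha0 : a 0 = 1)
    (hx : x = d 0)
    (hrec : ∀ n : ℕ, a n * d n + a n / (lam : ℂ) = a (n+1) * d (n+1) + a (n+1))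
    (hna : ∀ n : ℕ, ‖a n‖ ≤ C⁻¹ * ((1+α)⁻¹)^n)
    (hd : ∀ n : ℕ, ‖d n‖ ≤ K) :
    Summable (fun k : ℕ => ‖a (k+1)‖) ∧
      x = (1 - 1/(lam : ℂ)) * ∑' k : ℕ, a (k+1) - 1/(lam : ℂ) := by
  have hQ : ∀ n : ℕ, x = a n * d n + (1 - 1/(lam:ℂ)) * ∑ k ∈ Finset.range n, a (k+1)
      + a n / (lam:ℂ) - 1/(lam:ℂ) := by
    intro n
    induction n with
    | zero => rw [hx, ha0, Finset.range_zero, Finset.sum_empty]; ring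
    | succ n ih =>
      rw [Finset.sum_range_succ]
      linear_combination ih + hrec n
  have hr1 : (1+α)⁻¹ < 1 := by
    rw [inv_lt_one_iff₀]; right; linarith
  have hr0 : (0:ℝ) ≤ (1+α)⁻¹ := by positivity
  have hgeo : Summable (fun k : ℕ => C⁻¹ * ((1+α)⁻¹)^(k+1)) := by
    have := (summable_geometric_of_lt_one hr0 hr1).mul_left C⁻¹
    exact (summable_nat_add_iff 1).mpr this
  have hsum_norm : Summable (fun k : ℕ => ‖a (k+1)‖) :=
    Summable.of_nonneg_of_le (fun k => norm_nonneg _) (fun k => hna (k+1)) hgeo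
  refine ⟨hsum_norm, ?_⟩
  have hsum : Summable (fun k : ℕ => a (k+1)) := Summable.of_norm hsum_norm
  have hT := hsum.hasSum.tendsto_sum_nat
  have hza : Tendsto (fun n => ‖a n‖) atTop (nhds 0) := by
    have hlim : Tendsto (fun n : ℕ => C⁻¹ * ((1+α)⁻¹)^n) atTop (nhds 0) := by
      have h2 := (tendsto_pow_atTop_nhds_zero_of_lt_one hr0 hr1).const_mul C⁻¹
      rw [mul_zero] at h2
      exact h2
    exact squeeze_zero (fun n => norm_nonneg _) hna hlim
  have haz : Tendsto a atTop (nhds 0) := by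
    rw [tendsto_zero_iff_norm_tendsto_zero]; exact hza
  have had : Tendsto (fun n => a n * d n) atTop (nhds 0) := by
    rw [tendsto_zero_iff_norm_tendsto_zero]
    have hKle : ∀ n, ‖a n * d n‖ ≤ ‖a n‖ * K := by
      intro n
      rw [norm_mul]
      exact mul_le_mul_of_nonneg_left (hd n) (norm_nonneg _)
    have := hza.mul_const K
    rw [zero_mul] at this
    exact squeeze_zero (fun n => norm_nonneg _) hKle this
  have final : Tendsto (fun n : ℕ => a n * d n
      + (1 - 1/(lam:ℂ)) * ∑ k ∈ Finset.range n, a (k+1) + a n / (lam:ℂ) - 1/(lam:ℂ))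
      atTop (nhds ((0 + (1 - 1/(lam:ℂ)) * (∑' k : ℕ, a (k+1)) + 0 / (lam:ℂ)) - 1/(lam:ℂ))) :=
    ((had.add (tendsto_const_nhds.mul hT)).add (haz.div_const _)).sub tendsto_const_nhds
  have heqf : (fun n : ℕ => a n * d n
      + (1 - 1/(lam:ℂ)) * ∑ k ∈ Finset.range n, a (k+1) + a n / (lam:ℂ) - 1/(lam:ℂ))
      = fun _ => x := funext fun n => (hQ n).symm
  rw [heqf] at final
  have := tendsto_nhds_unique tendsto_const_nhds final
  linear_combination this

set_option maxHeartbeats 1000000 in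
/-- derivative of the conjugacy in the parameter. Under the conjugacy
relation `F_λ ∘ h_λ = h_λ ∘ F_{λ₀}` on the Julia set `J` of `F_{λ₀}`, differentiability
in `λ` with uniformly bounded derivative, and the expansion bound
`|(F_λ^n)'| ≥ C(1+α)^n` along the conjugated orbit, one has
`∂h_λ(z)/∂λ = (1 − 1/λ) Σ_{k≥1} 1/(F_λ^k)'(h_λ(z)) − 1/λ`, the series converging
absolutely. -/
theorem stmt7 (lam₀ lam : ℝ) (h₀ : 1 < lam₀) (hl : 1 < lam)
    (J : Set ℂ) (h : ℝ → ℂ → ℂ) (dh : ℂ → ℂ)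
    (hJinv : ∀ z ∈ J, expMap lam₀ z ∈ J)
    (hconj : ∀ μ ∈ Set.Ioi (1 : ℝ), ∀ z ∈ J, expMap μ (h μ z) = h μ (expMap lam₀ z))
    (hdiff : ∀ z ∈ J, HasDerivAt (fun μ : ℝ => h μ z) (dh z) lam)
    (K : ℝ) (hK : 0 < K) (hbdd : ∀ z ∈ J, ‖dh z‖ ≤ K)
    (C α : ℝ) (hC : 0 < C) (hα : 0 < α)
    (hlow : ∀ n : ℕ, ∀ z ∈ J, C * (1 + α) ^ n ≤ ‖iterDeriv lam n (h lam z)‖) :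
    ∀ z ∈ J,
      Summable (fun k : ℕ => ‖(iterDeriv lam (k + 1) (h lam z))⁻¹‖) ∧
      dh z = (1 - 1 / (lam : ℂ)) * ∑' k : ℕ, (iterDeriv lam (k + 1) (h lam z))⁻¹ -
        1 / (lam : ℂ) := by
  intro z hz
  have hlamC : ((lam : ℂ)) ≠ 0 := by
    simp only [ne_eq, Complex.ofReal_eq_zero]; linarith
  -- orbit stays in J
  have hzJ : ∀ n : ℕ, (expMap lam₀)^[n] z ∈ J := by
    intro n; induction n with
    | zero => simpa using hz
    | succ n ih => rw [Function.iterate_succ_apply']; exact hJinv _ ih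
  -- conjugated orbit
  have horb : ∀ n : ℕ, h lam ((expMap lam₀)^[n] z) = (expMap lam)^[n] (h lam z) := by
    intro n; induction n with
    | zero => simp
    | succ n ih =>
      rw [Function.iterate_succ_apply', Function.iterate_succ_apply',
        ← hconj lam hl _ (hzJ n), ih]
  -- derivative of the conjugacy relation in the parameter
  have E1 : ∀ y ∈ J, dh (expMap lam₀ y)
      = (Complex.exp (h lam y) - 1) + (lam : ℂ) * Complex.exp (h lam y) * dh y := by
    intro y hy
    have h1 : HasDerivAt (fun μ : ℝ => (μ : ℂ)) 1 lam := by
      exact Complex.ofRealCLM.hasDerivAt (x := lam)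
    have h2 : HasDerivAt (fun μ : ℝ => Complex.exp (h μ y) - 1)
        (Complex.exp (h lam y) * dh y) lam := ((hdiff y hy).cexp).sub_const 1
    have h3 := h1.mul h2
    have heq : (fun μ : ℝ => (μ : ℂ) * (Complex.exp (h μ y) - 1))
        =ᶠ[nhds lam] fun μ : ℝ => h μ (expMap lam₀ y) := by
      filter_upwards [Ioi_mem_nhds hl] with μ hμ
      exact hconj μ hμ y hy
    have h4 := h3.congr_of_eventuallyEq heq.symm
    have h5 := (hdiff (expMap lam₀ y) (hJinv y hy)).unique h4
    rw [h5]; ring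
  -- nonvanishing of the iterated derivative along the orbit
  have hne : ∀ n : ℕ, iterDeriv lam n (h lam z) ≠ 0 := by
    intro n
    have hp : (0:ℝ) < C * (1 + α) ^ n := by positivity
    exact norm_pos_iff.mp (lt_of_lt_of_le hp (hlow n z hz))
  have hEne : ∀ n : ℕ, Complex.exp ((expMap lam)^[n] (h lam z)) ≠ 0 :=
    fun n => Complex.exp_ne_zero _
  -- product recursion for the iterated derivative
  have hstep : ∀ n : ℕ, iterDeriv lam (n+1) (h lam z)
      = iterDeriv lam n (h lam z) * ((lam : ℂ) * Complex.exp ((expMap lam)^[n] (h lam z))) :=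
    fun n => Finset.prod_range_succ _ n
  -- the key recursion for partial quantities
  have hrec : ∀ n : ℕ,
      (iterDeriv lam n (h lam z))⁻¹ * dh ((expMap lam₀)^[n] z)
        + (iterDeriv lam n (h lam z))⁻¹ / (lam : ℂ)
      = (iterDeriv lam (n+1) (h lam z))⁻¹ * dh ((expMap lam₀)^[n+1] z)
        + (iterDeriv lam (n+1) (h lam z))⁻¹ := by
    intro n
    have e1 := E1 _ (hzJ n)
    rw [horb n,
      show expMap lam₀ ((expMap lam₀)^[n] z) = (expMap lam₀)^[n+1] z from
        (Function.iterate_succ_apply' _ _ _).symm] at e1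
    rw [e1, hstep n, mul_inv]
    have hIne := hne n
    have hE := hEne n
    field_simp
    ring
  -- norm bound
  have hna : ∀ n : ℕ, ‖(iterDeriv lam n (h lam z))⁻¹‖ ≤ C⁻¹ * ((1+α)⁻¹)^n := by
    intro n
    have hp : (0:ℝ) < C * (1 + α) ^ n := by positivity
    calc ‖(iterDeriv lam n (h lam z))⁻¹‖ = ‖iterDeriv lam n (h lam z)‖⁻¹ := norm_inv _
      _ ≤ (C * (1 + α) ^ n)⁻¹ := by
          exact inv_anti₀ hp (hlow n z hz)
      _ = C⁻¹ * ((1+α)⁻¹)^n := by rw [mul_inv, inv_pow]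
  exact aux7 lam C α K hC hα (dh z)
    (fun n => (iterDeriv lam n (h lam z))⁻¹)
    (fun n => dh ((expMap lam₀)^[n] z))
    (by simp [iterDeriv])
    (by simp)
    hrec hna (fun n => hbdd _ (hzJ n))
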